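/- arXiv:1912.11176 — 2 statements merged into one kernel-verified Lean document; each statement's English description precedes it below -/
import Mathlib

section
/- Let a ∈ ℝ^n and b ∈ ℝ^m have nonnegative entries with ∑_{i=1}^{n} a_i = 1 and ∑_{j=1}^{m} b_j = 1, let M ∈ ℝ^{n×m} be a cost matrix, and let γ > 0. Then the entropic optimal transport problem attains its minimum: there exists P* ∈ U(a,b) such that f_γ(P*) ≤ f_γ(Q) for all Q ∈ U(a,b), where f_γ(P) = ∑_{i,j} P_{ij} M_{ij} + γ ∑_{i,j} P_{ij}(log P_{ij} − 1). -/
open Matrix BigOperators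

/-- The transport polytope `U(a,b)`: matrices with nonnegative entries, row sums `a`,
and column sums `b`. -/
def transportPolytope {n m : ℕ} (a : Fin n → ℝ) (b : Fin m → ℝ) :
    Set (Matrix (Fin n) (Fin m) ℝ) :=
  {P | (∀ i j, 0 ≤ P i j) ∧ (∀ i, ∑ j, P i j = a i) ∧ (∀ j, ∑ i, P i j = b j)}

/-- The entropically regularized transport objective
`f_γ(P) = ∑_{i,j} P_{ij} M_{ij} + γ ∑_{i,j} P_{ij} (log P_{ij} − 1)`.
(Since `Real.log 0 = 0`, a term with `P i j = 0` contributes `0`.) -/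
noncomputable def entropicObjective {n m : ℕ} (M : Matrix (Fin n) (Fin m) ℝ) (γ : ℝ)
    (P : Matrix (Fin n) (Fin m) ℝ) : ℝ :=
  (∑ i, ∑ j, P i j * M i j) + γ * ∑ i, ∑ j, P i j * (Real.log (P i j) - 1)

lemma entry_continuous {n m : ℕ} (i : Fin n) (j : Fin m) :
    Continuous (fun P : Matrix (Fin n) (Fin m) ℝ => P i j) :=
  (continuous_apply j).comp (continuous_apply i)

lemma objective_continuous {n m : ℕ} (M : Matrix (Fin n) (Fin m) ℝ) (γ : ℝ) :
    Continuous (entropicObjective M γ) := by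
  unfold entropicObjective
  apply Continuous.add
  · exact continuous_finset_sum _ fun i _ => continuous_finset_sum _ fun j _ =>
      (entry_continuous i j).mul continuous_const
  · apply continuous_const.mul
    apply continuous_finset_sum _ fun i _ => continuous_finset_sum _ fun j _ => ?_
    have h : Continuous (fun x : ℝ => x * (Real.log x - 1)) := by
      have h2 := Real.continuous_mul_log.sub continuous_id
      convert h2 using 1
      ext x; simp; ring
    exact h.comp (entry_continuous i j)

lemma polytope_closed {n m : ℕ} (a : Fin n → ℝ) (b : Fin m → ℝ) :
    IsClosed (transportPolytope a b) := by
  have hrep : transportPolytope a b =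
      (⋂ i, ⋂ j, {P : Matrix (Fin n) (Fin m) ℝ | 0 ≤ P i j}) ∩
      ((⋂ i, {P : Matrix (Fin n) (Fin m) ℝ | ∑ j, P i j = a i}) ∩
       (⋂ j, {P : Matrix (Fin n) (Fin m) ℝ | ∑ i, P i j = b j})) := by
    ext P
    simp only [transportPolytope, Set.mem_setOf_eq, Set.mem_inter_iff, Set.mem_iInter,
      Set.mem_setOf_eq]
  rw [hrep]
  refine IsClosed.inter ?_ (IsClosed.inter ?_ ?_)
  · exact isClosed_iInter fun i => isClosed_iInter fun j =>
      isClosed_le continuous_const (entry_continuous i j)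
  · exact isClosed_iInter fun i =>
      isClosed_eq (continuous_finset_sum _ fun j _ => entry_continuous i j) continuous_const
  · exact isClosed_iInter fun j =>
      isClosed_eq (continuous_finset_sum _ fun i _ => entry_continuous i j) continuous_const

/-- For probability vectors `a`, `b`, any cost matrix `M`, and `γ > 0`,
the entropic optimal transport problem attains its minimum over `U(a,b)`. -/
theorem stmt_8 {n m : ℕ} (a : Fin n → ℝ) (b : Fin m → ℝ)
    (ha : ∀ i, 0 ≤ a i) (hb : ∀ j, 0 ≤ b j)
    (ha1 : ∑ i, a i = 1) (hb1 : ∑ j, b j = 1)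
    (M : Matrix (Fin n) (Fin m) ℝ) (γ : ℝ) (hγ : 0 < γ) :
    ∃ P ∈ transportPolytope a b, ∀ Q ∈ transportPolytope a b,
      entropicObjective M γ P ≤ entropicObjective M γ Q := by
  -- nonempty: product coupling
  have hne : (transportPolytope a b).Nonempty := by
    refine ⟨fun i j => a i * b j, fun i j => mul_nonneg (ha i) (hb j), fun i => ?_, fun j => ?_⟩
    · rw [← Finset.mul_sum, hb1, mul_one]
    · rw [← Finset.sum_mul, ha1, one_mul]
  -- compact: closed subset of [0,1]^(n×m)
  have hK : IsCompact (Set.pi Set.univ fun _ : Fin n =>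
      Set.pi Set.univ fun _ : Fin m => Set.Icc (0:ℝ) 1) :=
    isCompact_univ_pi fun _ => isCompact_univ_pi fun _ => isCompact_Icc
  have hsub : transportPolytope a b ⊆
      Set.pi Set.univ fun _ : Fin n => Set.pi Set.univ fun _ : Fin m => Set.Icc (0:ℝ) 1 := by
    rintro P ⟨hpos, hrow, _⟩ i _ j _
    refine ⟨hpos i j, ?_⟩
    have h1 : P i j ≤ ∑ j', P i j' :=
      Finset.single_le_sum (fun j' _ => hpos i j') (Finset.mem_univ j)
    have h2 : a i ≤ ∑ i', a i' :=
      Finset.single_le_sum (fun i' _ => ha i') (Finset.mem_univ i)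
    rw [hrow i] at h1
    rw [ha1] at h2
    exact h1.trans h2
  have hcpt : IsCompact (transportPolytope a b) :=
    IsCompact.of_isClosed_subset hK (polytope_closed a b) hsub
  obtain ⟨P, hP, hmin⟩ := hcpt.exists_isMinOn hne
    (objective_continuous M γ).continuousOn
  exact ⟨P, hP, fun Q hQ => hmin hQ⟩
end

section
/- Let a ∈ ℝ^n, b ∈ ℝ^m, M ∈ ℝ^{n×m}, and γ > 0. The minimizer of the entropically regularized transport objective over U(a,b) is unique: if P, Q ∈ U(a,b) both satisfy f_γ(P) ≤ f_γ(R) and f_γ(Q) ≤ f_γ(R) for all R ∈ U(a,b), then P = Q. -/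
open Matrix BigOperators

lemma gStrictConvex : StrictConvexOn ℝ (Set.Ici (0:ℝ)) (fun x : ℝ => x * (Real.log x - 1)) := by
  have h : (fun x : ℝ => x * (Real.log x - 1)) = (fun x : ℝ => x * Real.log x) + fun x : ℝ => -x := by
    ext x; simp; ring
  rw [h]
  exact Real.strictConvexOn_mul_log.add_convexOn
    ((concaveOn_id (convex_Ici 0)).neg)

lemma g_mid_le {p q : ℝ} (hp : 0 ≤ p) (hq : 0 ≤ q) :
    ((p + q)/2) * (Real.log ((p + q)/2) - 1)
      ≤ (p * (Real.log p - 1) + q * (Real.log q - 1)) / 2 := by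
  have := gStrictConvex.convexOn.2 (Set.mem_Ici.2 hp) (Set.mem_Ici.2 hq)
    (by norm_num : (0:ℝ) ≤ 1/2) (by norm_num : (0:ℝ) ≤ 1/2) (by norm_num)
  simp only [smul_eq_mul] at this
  have e1 : (1/2:ℝ) * p + 1/2 * q = (p+q)/2 := by ring
  rw [e1] at this; linarith

lemma g_mid_lt {p q : ℝ} (hp : 0 ≤ p) (hq : 0 ≤ q) (hne : p ≠ q) :
    ((p + q)/2) * (Real.log ((p + q)/2) - 1)
      < (p * (Real.log p - 1) + q * (Real.log q - 1)) / 2 := by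
  have := gStrictConvex.2 (Set.mem_Ici.2 hp) (Set.mem_Ici.2 hq) hne
    (by norm_num : (0:ℝ) < 1/2) (by norm_num : (0:ℝ) < 1/2) (by norm_num)
  simp only [smul_eq_mul] at this
  have e1 : (1/2:ℝ) * p + 1/2 * q = (p+q)/2 := by ring
  rw [e1] at this; linarith

/-- The minimizer of the entropically regularized transport objective over
`U(a,b)` is unique: any two minimizers coincide. -/
theorem stmt_9 {n m : ℕ} (a : Fin n → ℝ) (b : Fin m → ℝ)
    (M : Matrix (Fin n) (Fin m) ℝ) (γ : ℝ) (hγ : 0 < γ)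
    (P Q : Matrix (Fin n) (Fin m) ℝ)
    (hP : P ∈ transportPolytope a b) (hQ : Q ∈ transportPolytope a b)
    (hPmin : ∀ R ∈ transportPolytope a b, entropicObjective M γ P ≤ entropicObjective M γ R)
    (hQmin : ∀ R ∈ transportPolytope a b, entropicObjective M γ Q ≤ entropicObjective M γ R) :
    P = Q := by
  
  by_contra hne
  obtain ⟨i0, hrow⟩ : ∃ i, P i ≠ Q i := by
    by_contra h; push_neg at h; exact hne (funext h)
  obtain ⟨j0, hij⟩ : ∃ j, P i0 j ≠ Q i0 j := by
    by_contra h; push_neg at h; exact hrow (funext h)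
  obtain ⟨hP1, hP2, hP3⟩ := hP
  obtain ⟨hQ1, hQ2, hQ3⟩ := hQ
  set R : Matrix (Fin n) (Fin m) ℝ := fun i j => (P i j + Q i j)/2 with hRdef
  have hR : R ∈ transportPolytope a b := by
    refine ⟨fun i j => by have := hP1 i j; have := hQ1 i j; positivity, fun i => ?_, fun j => ?_⟩
    · simp only [hRdef]
      rw [← Finset.sum_div, Finset.sum_add_distrib, hP2 i, hQ2 i]; ring
    · simp only [hRdef]
      rw [← Finset.sum_div, Finset.sum_add_distrib, hP3 j, hQ3 j]; ring
  have hfPQ : entropicObjective M γ P = entropicObjective M γ Q :=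
    le_antisymm (hPmin Q ⟨hQ1, hQ2, hQ3⟩) (hQmin P ⟨hP1, hP2, hP3⟩)
  -- entropy sums
  have hent : ∑ i, ∑ j, R i j * (Real.log (R i j) - 1)
      < (∑ i, ∑ j, P i j * (Real.log (P i j) - 1)
        + ∑ i, ∑ j, Q i j * (Real.log (Q i j) - 1)) / 2 := by
    rw [← Fintype.sum_prod_type (f := fun p : Fin n × Fin m => R p.1 p.2 * (Real.log (R p.1 p.2) - 1)),
        ← Fintype.sum_prod_type (f := fun p : Fin n × Fin m => P p.1 p.2 * (Real.log (P p.1 p.2) - 1)),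
        ← Fintype.sum_prod_type (f := fun p : Fin n × Fin m => Q p.1 p.2 * (Real.log (Q p.1 p.2) - 1)),
        ← Finset.sum_add_distrib, Finset.sum_div]
    apply Finset.sum_lt_sum
    · intro p _
      exact g_mid_le (hP1 p.1 p.2) (hQ1 p.1 p.2)
    · exact ⟨(i0, j0), Finset.mem_univ _, g_mid_lt (hP1 i0 j0) (hQ1 i0 j0) hij⟩
  have hlin : ∑ i, ∑ j, R i j * M i j
      = (∑ i, ∑ j, P i j * M i j + ∑ i, ∑ j, Q i j * M i j) / 2 := by
    simp only [hRdef]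
    rw [← Finset.sum_add_distrib, Finset.sum_div]
    apply Finset.sum_congr rfl
    intro i _
    rw [← Finset.sum_add_distrib, Finset.sum_div]
    apply Finset.sum_congr rfl
    intro j _; ring
  have hRlt : entropicObjective M γ R < entropicObjective M γ P := by
    unfold entropicObjective at hfPQ ⊢
    rw [hlin]
    nlinarith [hent, hγ]
  exact absurd (hPmin R hR) (not_le.2 hRlt)
end
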